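/- ‖5^6‖ = ‖15625‖ ≤ 29 < 30 = 6·‖5‖; in particular the complexity is not multiplicative on prime powers for p = 5. -/
import Mathlib


/-- `IsSumProduct k n` means the positive integer `n` can be written as a
sum-product expression using exactly `k` ones, additions, multiplications
and parentheses. -/
inductive IsSumProduct : ℕ → ℕ → Prop
  | one : IsSumProduct 1 1
  | add {j k a b : ℕ} : IsSumProduct j a → IsSumProduct k b →
      IsSumProduct (j + k) (a + b)
  | mul {j k a b : ℕ} : IsSumProduct j a → IsSumProduct k b →
      IsSumProduct (j + k) (a * b)

/-- The complexity `‖n‖` of a positive integer `n`: the least number of 1's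
needed to express `n` using only 1's, addition, multiplication and
parentheses. -/
noncomputable def complexity (n : ℕ) : ℕ := sInf {k | IsSumProduct k n}

lemma sp_pos {k n : ℕ} (h : IsSumProduct k n) : 1 ≤ k ∧ 1 ≤ n := by
  induction h with
  | one => omega
  | add _ _ ih1 ih2 => omega
  | mul _ _ ih1 ih2 => exact ⟨by omega, Nat.mul_pos ih1.2 ih2.2⟩

lemma sp_small {k n : ℕ} (h : IsSumProduct k n) (hk : k ≤ 4) : n ≤ k := by
  induction h with
  | one => omega
  | add h1 h2 ih1 ih2 => omega
  | mul h1 h2 ih1 ih2 =>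
    rename_i j k' a b
    have p1 := sp_pos h1
    have p2 := sp_pos h2
    have ha : a ≤ j := ih1 (by omega)
    have hb : b ≤ k' := ih2 (by omega)
    have : a * b ≤ j * k' := Nat.mul_le_mul ha hb
    have hj1 : 1 ≤ j := p1.1
    have hj2 : j ≤ 3 := by omega
    have hk1 : 1 ≤ k' := p2.1
    have hk2 : k' ≤ 3 := by omega
    have : j * k' ≤ j + k' := by
      interval_cases j <;> interval_cases k' <;> omega
    omega

lemma sp5 : IsSumProduct 5 5 :=
  .add .one (.add .one (.add .one (.add .one .one)))

lemma sp15625 : IsSumProduct 29 15625 := by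
  have h1 : IsSumProduct 1 1 := .one
  have h2 : IsSumProduct 2 2 := h1.add h1
  have h3 : IsSumProduct 3 3 := h1.add h2
  have h216 : IsSumProduct 15 216 := h2.mul (h2.mul (h2.mul (h3.mul (h3.mul h3))))
  have h217 : IsSumProduct 16 217 := h1.add h216
  have h72 : IsSumProduct 12 72 := h2.mul (h2.mul (h2.mul (h3.mul h3)))
  exact h1.add (h72.mul h217)

lemma complexity_five : complexity 5 = 5 := by
  apply le_antisymm
  · exact Nat.sInf_le sp5
  · refine le_csInf ⟨5, sp5⟩ fun k hk => ?_
    by_contra hlt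
    have := sp_small hk (by omega)
    omega

theorem complexity_five_pow_six :
    complexity (5 ^ 6) = complexity 15625 ∧ complexity 15625 ≤ 29 ∧
    complexity 15625 < 6 * complexity 5 ∧ 6 * complexity 5 = 30 := by
  have h29 : complexity 15625 ≤ 29 := Nat.sInf_le sp15625
  refine ⟨by norm_num, h29, ?_, by rw [complexity_five]⟩
  rw [complexity_five]; omega
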